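/- Let A: V → V be a linear map with A² = −I on a finite-dimensional real vector space V, and let g: V → V be a smooth map satisfying the flow-equivariance condition g(eᵗ e^{−At} z) = eᵗ e^{−At} g(z) for all t ∈ ℝ and z ∈ V. Then g(0) = 0, g equals its derivative at the origin (so g is linear), and g commutes with A. -/

import Mathlib

open NormedSpace Filter

/-- In a Banach algebra, if `a * a = -1` then `exp (t • a) = cos t • 1 + sin t • a`. -/
theorem exp_smul_of_sq_eq_neg_one {𝔸 : Type*} [NormedRing 𝔸] [NormedAlgebra ℝ 𝔸]
    [CompleteSpace 𝔸] (a : 𝔸) (ha : a * a = -1) (t : ℝ) :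
    exp (t • a) = Real.cos t • 1 + Real.sin t • a := by
  have key : ∀ s : ℝ, exp (s • a) * (Real.cos s • 1 - Real.sin s • a) = 1 := by
    have hder : ∀ s : ℝ, HasDerivAt
        (fun u : ℝ => exp (u • a) * (Real.cos u • 1 - Real.sin u • a)) 0 s := by
      intro s
      have h1 : HasDerivAt (fun u : ℝ => exp (u • a)) (exp (s • a) * a) s :=
        hasDerivAt_exp_smul_const a s
      have h2 : HasDerivAt (fun u : ℝ => Real.cos u • (1:𝔸) - Real.sin u • a)
          ((-Real.sin s) • (1:𝔸) - Real.cos s • a) s :=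
        ((Real.hasDerivAt_cos s).smul_const (1:𝔸)).sub
          ((Real.hasDerivAt_sin s).smul_const a)
      have := h1.mul h2
      convert this using 1
      · rfl
      have : a * (Real.cos s • 1 - Real.sin s • a) = Real.cos s • a + Real.sin s • 1 := by
        simp [mul_sub, mul_smul_comm, ha, smul_neg]
      rw [mul_assoc, this]
      simp only [mul_add, mul_sub, mul_smul_comm, mul_one, neg_smul, mul_neg]
      module
    have hconst : ∀ s : ℝ, (fun u : ℝ => exp (u • a) * (Real.cos u • 1 - Real.sin u • a)) s
        = (fun u : ℝ => exp (u • a) * (Real.cos u • 1 - Real.sin u • a)) 0 := by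
      intro s
      apply is_const_of_deriv_eq_zero (fun x => (hder x).differentiableAt)
        (fun x => (hder x).deriv)
    intro s
    simpa using hconst s
  have hunit : (Real.cos t • (1:𝔸) - Real.sin t • a) * (Real.cos t • 1 + Real.sin t • a) = 1 := by
    have : (Real.cos t • (1:𝔸) - Real.sin t • a) * (Real.cos t • 1 + Real.sin t • a)
        = (Real.cos t * Real.cos t) • 1 - (Real.sin t * Real.sin t) • (a * a) := by
      rw [sub_mul, mul_add, mul_add]
      simp [smul_mul_smul_comm, mul_comm]
      module
    rw [this, ha]
    have := Real.sin_sq_add_cos_sq t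
    rw [smul_neg, sub_neg_eq_add, ← add_smul]
    rw [show Real.cos t * Real.cos t + Real.sin t * Real.sin t = 1 by nlinarith]
    simp
  calc exp (t • a) = exp (t • a) * ((Real.cos t • 1 - Real.sin t • a)
        * (Real.cos t • 1 + Real.sin t • a)) := by rw [hunit, mul_one]
    _ = (exp (t • a) * (Real.cos t • 1 - Real.sin t • a))
        * (Real.cos t • 1 + Real.sin t • a) := by rw [mul_assoc]
    _ = Real.cos t • 1 + Real.sin t • a := by rw [key, one_mul]

/-- If `A : V → V` is linear with `A² = −I` and the smooth map `g : V → V`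
satisfies the flow-equivariance `g(eᵗ e^{−At} z) = eᵗ e^{−At} g(z)` for all `t, z`, then
`g(0) = 0`, `g` equals its derivative at the origin (so `g` is linear), and `g` commutes
with `A`. -/
theorem stmt_9 {V : Type*} [NormedAddCommGroup V] [NormedSpace ℝ V] [FiniteDimensional ℝ V]
    (A : V →L[ℝ] V) (hA2 : ∀ z : V, A (A z) = -z)
    (g : V → V) (hg : ContDiff ℝ (⊤ : ℕ∞) g)
    (hflow : ∀ (t : ℝ) (z : V),
      g (Real.exp t • (NormedSpace.exp ((-t) • A)) z) =
        Real.exp t • (NormedSpace.exp ((-t) • A)) (g z)) :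
    g 0 = 0 ∧ (∀ z : V, g z = fderiv ℝ g 0 z) ∧ ∀ z : V, g (A z) = A (g z) := by
  have hAA : A * A = -1 := by
    ext z
    simp [ContinuousLinearMap.mul_apply, hA2]
  have expA : ∀ t : ℝ, NormedSpace.exp (t • A) = Real.cos t • 1 + Real.sin t • A :=
    exp_smul_of_sq_eq_neg_one A hAA
  -- exp of nπ-multiples is identity
  have sin2pin : ∀ n : ℕ, Real.sin ((n : ℝ) * (2 * Real.pi)) = 0 := by
    intro n
    rw [show (n : ℝ) * (2 * Real.pi) = ((2 * n : ℕ) : ℝ) * Real.pi by push_cast; ring]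
    exact Real.sin_nat_mul_pi (2 * n)
  have expA2pin : ∀ n : ℕ, NormedSpace.exp (((n : ℝ) * (2 * Real.pi)) • A) = 1 := by
    intro n
    rw [expA, Real.cos_nat_mul_two_pi, sin2pin, zero_smul, one_smul, add_zero]
  -- scaling identity
  have hscale : ∀ (n : ℕ) (z : V),
      g (Real.exp (-((n : ℝ) * (2 * Real.pi))) • z)
        = Real.exp (-((n : ℝ) * (2 * Real.pi))) • g z := by
    intro n z
    have h := hflow (-((n : ℝ) * (2 * Real.pi))) z
    rw [neg_neg, expA2pin n] at h
    simpa using h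
  -- Part 1 : g 0 = 0
  have hg0 : g 0 = 0 := by
    have h := hscale 1 0
    rw [smul_zero] at h
    have h2 : (1 - Real.exp (-((1 : ℕ) * (2 * Real.pi)))) • g 0 = 0 := by
      rw [sub_smul, one_smul, ← h, sub_self]
    rcases smul_eq_zero.mp h2 with h3 | h3
    · exfalso
      have : Real.exp (-((1 : ℕ) * (2 * Real.pi))) < 1 := by
        apply Real.exp_lt_one_iff.mpr
        have := Real.pi_pos
        push_cast
        nlinarith
      linarith [sub_eq_zero.mp h3]
    · exact h3
  -- Part 2 : g = fderiv at 0
  set L := fderiv ℝ g 0 with hL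
  have hF : HasFDerivAt g L 0 := (hg.differentiable (by simp) 0).hasFDerivAt
  have hlin : ∀ z : V, g z = L z := by
    intro z
    have h1 : HasDerivAt (fun s : ℝ => s • z) z 0 := by
      simpa using (hasDerivAt_id (0 : ℝ)).smul_const z
    have hF' : HasFDerivAt g L ((fun s : ℝ => s • z) 0) := by
      simpa using hF
    have hd : HasDerivAt (fun s : ℝ => g (s • z)) (L z) 0 :=
      hF'.comp_hasDerivAt 0 h1
    rw [hasDerivAt_iff_tendsto_slope] at hd
    set u : ℕ → ℝ := fun n => Real.exp (-((n : ℝ) * (2 * Real.pi))) with hu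
    have hu0 : Tendsto u atTop (nhdsWithin 0 {x : ℝ | x ≠ 0}) := by
      rw [tendsto_nhdsWithin_iff]
      constructor
      · have h1 : Tendsto (fun n : ℕ => -((n : ℝ) * (2 * Real.pi))) atTop atBot := by
          apply Filter.tendsto_neg_atTop_atBot.comp
          exact Filter.Tendsto.atTop_mul_const (by positivity) tendsto_natCast_atTop_atTop
        exact Real.tendsto_exp_atBot.comp h1
      · exact Filter.Eventually.of_forall fun n => (Real.exp_pos _).ne'
    have hslope : ∀ n : ℕ, slope (fun s : ℝ => g (s • z)) 0 (u n) = g z := by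
      intro n
      have hne : u n ≠ 0 := (Real.exp_pos _).ne'
      simp only [slope, vsub_eq_sub, sub_zero, zero_smul]
      rw [hg0, sub_zero, hu]
      rw [hscale n z]
      exact inv_smul_smul₀ hne _
    have hconst : Tendsto (fun n : ℕ => slope (fun s : ℝ => g (s • z)) 0 (u n)) atTop
        (nhds (L z)) := hd.comp hu0
    rw [funext hslope] at hconst
    exact tendsto_nhds_unique tendsto_const_nhds hconst
  refine ⟨hg0, hlin, ?_⟩
  intro z
  have h := hflow (-(Real.pi / 2)) z
  rw [neg_neg, expA (Real.pi / 2), Real.cos_pi_div_two, Real.sin_pi_div_two] at h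
  simp only [zero_smul, one_smul, zero_add, ContinuousLinearMap.add_apply,
    ContinuousLinearMap.zero_apply, zero_add] at h
  rw [hlin (Real.exp (-(Real.pi / 2)) • A z), map_smul, ← hlin (A z)] at h
  exact smul_right_injective V (Real.exp_ne_zero _) h
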